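/- Let S = {f_1,…,f_k} be a jointly regular family of affine morphisms with r = max_l r(f_l), let Φ be the monoid generated by S under composition, and set δ_S = (1/(1+1/r))·∑_{l=1}^k 1/deg(f_l). If δ_S < 1, then the set Pre(Φ) = ⋂_{φ∈Φ} Pre(φ) of points with finite Φ-orbit is a set of bounded height: explicitly, h(P) ≤ C/(1−δ_S) for all P ∈ Pre(Φ), where C is the constant from the height inequality for S. -/

import Mathlib

open scoped Classical NNReal

noncomputable section

namespace PaperHeights

open NumberField IsDedekindDomain

/-- The `v`-adic absolute value of `x ∈ K`, normalized so that
`‖x‖_v = N(v)^{-ord_v(x)}`. -/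
noncomputable def vAbs {K : Type*} [Field K] [NumberField K]
    (v : HeightOneSpectrum (𝓞 K)) (x : K) : ℝ :=
  (WithZeroMulInt.toNNReal
    (by
      have : v.asIdeal ≠ ⊥ := v.ne_bot
      simpa [ne_eq, Nat.cast_eq_zero, Ideal.absNorm_eq_zero_iff] using this
      : ((Ideal.absNorm v.asIdeal : ℝ≥0)) ≠ 0)
    (v.valuation K x) : ℝ≥0)

/-- The multiplicative Weil height of a tuple of coordinates in a number field `K`,
relative to `K`. -/
noncomputable def mulHeight {K : Type*} [Field K] [NumberField K] {m : ℕ}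
    (x : Fin (m + 1) → K) : ℝ :=
  (∏ᶠ v : HeightOneSpectrum (𝓞 K),
      Finset.univ.sup' Finset.univ_nonempty fun i => vAbs v (x i)) *
    ∏ v : InfinitePlace K,
      (Finset.univ.sup' Finset.univ_nonempty fun i => v (x i)) ^ v.mult

/-- The absolute logarithmic Weil height of a tuple of coordinates in `K`. -/
noncomputable def logHeight {K : Type*} [Field K] [NumberField K] {m : ℕ}
    (x : Fin (m + 1) → K) : ℝ :=
  Real.log (mulHeight x) / (Module.finrank ℚ K)

/-- The field of algebraic numbers. -/
abbrev Qbar : Type := AlgebraicClosure ℚ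

/-- The absolute logarithmic Weil height of a point of `ℙⁿ(ℚ̄)` given by homogeneous
coordinates `x : Fin (n+1) → ℚ̄` (it is scaling invariant, so well defined on `ℙⁿ`). -/
noncomputable def projHeight {n : ℕ} (x : Fin (n + 1) → Qbar) : ℝ :=
  letI K : IntermediateField ℚ Qbar := IntermediateField.adjoin ℚ (Set.range x)
  haveI : FiniteDimensional ℚ K :=
    IntermediateField.finiteDimensional_adjoin fun y _ => by
      have h := (AlgebraicClosure.isAlgebraic ℚ).isAlgebraic y
      convert h.isIntegral
      exact Subsingleton.elim _ _
  haveI : NumberField K := ⟨⟩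
  logHeight fun i =>
    (⟨x i, IntermediateField.subset_adjoin ℚ (Set.range x) ⟨i, rfl⟩⟩ : K)

/-- The logarithmic Weil height of a point of affine `n`-space `𝔸ⁿ(ℚ̄)`, computed via the
standard embedding `𝔸ⁿ ⊆ ℙⁿ`, `P ↦ [P : 1]`. -/
noncomputable def affHeight {n : ℕ} (P : Fin n → Qbar) : ℝ :=
  projHeight (Fin.snoc P 1)

end PaperHeights

namespace PaperHeights

open MvPolynomial

/-- A (dominant or not) rational self-map of `ℙⁿ` over `ℚ̄`, given by `n+1` homogeneous
polynomials of common degree `d` with no common factor and not all zero. -/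
structure RatMap (n : ℕ) where
  d : ℕ
  hd : 0 < d
  F : Fin (n + 1) → MvPolynomial (Fin (n + 1)) Qbar
  homog : ∀ i, (F i).IsHomogeneous d
  nontriv : ∃ i, F i ≠ 0
  coprime : ∀ q : MvPolynomial (Fin (n + 1)) Qbar, (∀ i, q ∣ F i) → IsUnit q

variable {n : ℕ}

/-- Evaluation of the defining polynomials of a rational map on a coordinate vector. -/
noncomputable def RatMap.eval (f : RatMap n) (x : Fin (n + 1) → Qbar) :
    Fin (n + 1) → Qbar :=
  fun i => MvPolynomial.eval x (f.F i)

/-- The indeterminacy locus `Z(f)`, as a set of nonzero coordinate vectors. -/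
def RatMap.Indet (f : RatMap n) : Set (Fin (n + 1) → Qbar) :=
  {x | x ≠ 0 ∧ f.eval x = 0}

/-- `f` is a morphism if its indeterminacy locus is empty. -/
def RatMap.IsMorphism (f : RatMap n) : Prop :=
  ∀ x : Fin (n + 1) → Qbar, x ≠ 0 → f.eval x ≠ 0

/-- `f` is defined over the number field `K ⊆ ℚ̄` if all coefficients of its defining
polynomials lie in `K`. -/
def RatMap.DefinedOver (f : RatMap n) (K : IntermediateField ℚ Qbar) : Prop :=
  ∀ (i : Fin (n + 1)) (m : (Fin (n + 1)) →₀ ℕ), (f.F i).coeff m ∈ K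

end PaperHeights

namespace PaperHeights

open scoped ENNReal

variable {n : ℕ}

/-- A resolution of indeterminacy `(V, π)` of a rational map `f : ℙⁿ ⇢ ℙⁿ`, together with
the coefficients of `π*H` and of `φ*H` (`φ = f ∘ π` the resolved morphism) in the basis
`{H_V, E_1, …, E_s}` of `Pic(V)` given by the proper transform of the hyperplane `H` and
the exceptional components.  Index `0` corresponds to `H_V`. -/
structure Resolution (f : RatMap n) where
  V : Type
  π : V → (Fin (n + 1) → Qbar)
  φ : V → (Fin (n + 1) → Qbar)
  hπ : ∀ v, π v ≠ 0
  hφ : ∀ v, φ v ≠ 0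
  hsurj : ∀ x : Fin (n + 1) → Qbar, x ≠ 0 → ∃ v, ∃ c : Qbar, c ≠ 0 ∧ π v = c • x
  hcompat : ∀ v, π v ∉ f.Indet → ∃ c : Qbar, c ≠ 0 ∧ φ v = c • f.eval (π v)
  s : ℕ
  a : Fin (s + 1) → ℕ
  b : Fin (s + 1) → ℕ
  ha0 : a 0 = 1
  hb0 : b 0 = f.d

/-- The `D`-ratio of the resolved morphism of a resolution of indeterminacy:
`r(φ) = deg f · max_i (aᵢ / bᵢ)`, with value `∞` if some `bᵢ = 0` while `aᵢ ≠ 0`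
(in `ℝ≥0∞` one has `aᵢ/0 = ∞` for `aᵢ ≠ 0`, and `0/0 = 0`). -/
noncomputable def Resolution.Dratio {f : RatMap n} (R : Resolution f) : ℝ≥0∞ :=
  (f.d : ℝ≥0∞) * ⨆ i : Fin (R.s + 1), (R.a i : ℝ≥0∞) / (R.b i : ℝ≥0∞)

/-- The `D`-ratio of a rational map, defined via resolutions of indeterminacy. -/
noncomputable def RatMap.Dratio (f : RatMap n) : ℝ≥0∞ :=
  ⨅ R : Resolution f, R.Dratio

end PaperHeights

namespace PaperHeights

/-- `f` is the meromorphic extension to `ℙⁿ` of an affine morphism `𝔸ⁿ → 𝔸ⁿ`. -/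
def RatMap.IsAffineMorphismExtension {n : ℕ} (f : RatMap n) : Prop :=
  f.F (Fin.last n) = MvPolynomial.X (Fin.last n) ^ f.d

/-- The family `f₁, …, f_k` is jointly regular: `⋂ Z(f_l) = ∅`. -/
def JointlyRegular {n k : ℕ} (f : Fin k → RatMap n) : Prop :=
  (⋂ l, (f l).Indet) = ∅

/-- The affine self-map of `𝔸ⁿ(ℚ̄)` induced by a rational map which extends an affine
morphism (evaluation on the chart `{x_n = 1}`). -/
noncomputable def RatMap.affineMap {n : ℕ} (f : RatMap n) :
    (Fin n → Qbar) → (Fin n → Qbar) :=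
  fun P i => MvPolynomial.eval (Fin.snoc P 1) (f.F i.castSucc)

/-- Application of a word in the generating maps: `f_I = f_{i₁} ∘ ⋯ ∘ f_{i_m}`. -/
noncomputable def wordApply {n k : ℕ} (f : Fin k → RatMap n) :
    List (Fin k) → (Fin n → Qbar) → (Fin n → Qbar)
  | [], P => P
  | l :: w, P => (f l).affineMap (wordApply f w P)

/-- The orbit `Φ(P)` of a point under the monoid `Φ` generated by the family. -/
noncomputable def monoidOrbit {n k : ℕ} (f : Fin k → RatMap n) (P : Fin n → Qbar) :
    Set (Fin n → Qbar) :=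
  {Q | ∃ w : List (Fin k), Q = wordApply f w P}

end PaperHeights


namespace PaperHeights

open NumberField IsDedekindDomain

lemma logHeight_nonneg' {K : Type*} [Field K] [NumberField K] {m : ℕ}
    (x : Fin (m + 1) → K) (i0 : Fin (m + 1)) (h : x i0 = 1) : 0 ≤ logHeight x := by
  have h1 : (1 : ℝ) ≤ mulHeight x := by
    unfold mulHeight
    have hfin : (1 : ℝ) ≤ ∏ᶠ v : HeightOneSpectrum (𝓞 K),
        Finset.univ.sup' Finset.univ_nonempty fun i => vAbs v (x i) := by
      refine finprod_induction _ le_rfl (fun a b ha hb => by nlinarith) fun v => ?_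
      calc (1 : ℝ) = vAbs v (x i0) := by simp [vAbs, h]
        _ ≤ _ := Finset.le_sup' (fun i => vAbs v (x i)) (Finset.mem_univ i0)
    have hinf : (1 : ℝ) ≤ ∏ v : InfinitePlace K,
        (Finset.univ.sup' Finset.univ_nonempty fun i => v (x i)) ^ v.mult := by
      calc (1 : ℝ) = ∏ _v : InfinitePlace K, 1 := by simp
        _ ≤ _ := by
            refine Finset.prod_le_prod (by simp) fun v _ => one_le_pow₀ ?_
            calc (1 : ℝ) = v (x i0) := by simp [h]
              _ ≤ _ := Finset.le_sup' (fun i => v (x i)) (Finset.mem_univ i0)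
    nlinarith
  unfold logHeight
  have h2 : (0 : ℝ) < (Module.finrank ℚ K : ℝ) := by
    exact_mod_cast Module.finrank_pos
  exact div_nonneg (Real.log_nonneg h1) h2.le

lemma affHeight_nonneg {n : ℕ} (P : Fin n → Qbar) : 0 ≤ affHeight P := by
  haveI : FiniteDimensional ℚ
      (IntermediateField.adjoin ℚ (Set.range (Fin.snoc P (1 : Qbar)))) :=
    IntermediateField.finiteDimensional_adjoin fun y _ => by
      have h := (AlgebraicClosure.isAlgebraic ℚ).isAlgebraic y
      convert h.isIntegral
      exact Subsingleton.elim _ _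
  haveI : NumberField
      (IntermediateField.adjoin ℚ (Set.range (Fin.snoc P (1 : Qbar)))) := ⟨⟩
  unfold affHeight projHeight
  exact logHeight_nonneg' _ (Fin.last n) (Subtype.ext (by simp))

end PaperHeights

open PaperHeights in
open scoped ENNReal in
/-- Let `S = {f₁,…,f_k}` be a jointly regular family of affine morphisms
with `r = max_l r(f_l)`, let `Φ` be the monoid generated by `S` under composition, and set
`δ_S = (1/(1+1/r))·∑ 1/deg f_l`.  If `δ_S < 1`, then the set `Pre(Φ)` of points with finite
`Φ`-orbit is a set of bounded height: explicitly `h(P) ≤ C/(1−δ_S)` for all `P ∈ Pre(Φ)`,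
where `C` is the constant from the height inequality for `S`. -/
theorem statement18 (n k : ℕ) (f : Fin k → RatMap n)
    (haff : ∀ l, (f l).IsAffineMorphismExtension)
    (hjr : JointlyRegular f)
    (r : ℝ≥0∞) (hr : r = ⨆ l, (f l).Dratio)
    (δ : ℝ) (hδ : δ = (1 / (1 + (1 / r).toReal)) * ∑ l, (1 / ((f l).d : ℝ)))
    (hδ1 : δ < 1)
    (C : ℝ)
    (hC : ∀ Q : Fin n → Qbar,
      (∑ l, (1 / ((f l).d : ℝ)) * affHeight ((f l).affineMap Q))
        > (1 + (1 / r).toReal) * affHeight Q - C) :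
    ∀ P : Fin n → Qbar, (monoidOrbit f P).Finite → affHeight P ≤ C / (1 - δ) := by
  intro P hfin
  have hPmem : P ∈ monoidOrbit f P := ⟨[], rfl⟩
  obtain ⟨Q₀, hQ₀mem, hmax⟩ :=
    Set.Finite.exists_maximalFor affHeight _ hfin ⟨P, hPmem⟩
  have hmax' : ∀ Q ∈ monoidOrbit f P, affHeight Q ≤ affHeight Q₀ := by
    intro Q hQ
    by_contra hlt
    push_neg at hlt
    exact absurd (hmax hQ hlt.le) (not_le.mpr hlt)
  set M := affHeight Q₀ with hMdef
  set t := (1 / r).toReal with htdef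
  have ht : 0 ≤ t := ENNReal.toReal_nonneg
  have hM0 : 0 ≤ M := affHeight_nonneg Q₀
  have hPM : affHeight P ≤ M := hmax' P hPmem
  obtain ⟨w, hw⟩ := hQ₀mem
  have hstep : ∀ l : Fin k, (f l).affineMap Q₀ ∈ monoidOrbit f P := fun l =>
    ⟨l :: w, by simp [wordApply, hw]⟩
  have hsum : (∑ l, (1 / ((f l).d : ℝ)) * affHeight ((f l).affineMap Q₀))
      ≤ (∑ l, (1 / ((f l).d : ℝ))) * M := by
    rw [Finset.sum_mul]
    refine Finset.sum_le_sum fun l _ => ?_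
    have h1 := hmax' _ (hstep l)
    have hd : (0 : ℝ) ≤ 1 / ((f l).d : ℝ) := by positivity
    exact mul_le_mul_of_nonneg_left h1 hd
  have h1t : (0 : ℝ) < 1 + t := by linarith
  have hS : (∑ l, (1 / ((f l).d : ℝ))) = δ * (1 + t) := by
    rw [hδ]; field_simp
  have hCQ := hC Q₀
  have h1δ : (0 : ℝ) < 1 - δ := by linarith
  have hkey : (1 - δ) * M < C := by
    nlinarith [mul_nonneg ht hM0, mul_nonneg (mul_nonneg ht hM0) h1δ.le]
  have : M < C / (1 - δ) := (lt_div_iff₀ h1δ).mpr (by linarith [hkey])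
  linarith
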